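/- Suppose α_n ≥ 1/2 for all n and that the 4-point inequality d_{il} + d_{kj} ≤ d_{ij} + d_{kl} holds for all 0 ≤ i ≤ k ≤ j ≤ l < n. Then for all m ≤ n, the plan z given by z_{ii} = π_i^n for i = 0,...,m; z_{mj} = π_j^n for j = m+1,...,n−1; z_{in} = π_i^m − π_i^n for i = 0,...,m−1; z_{mn} = π_m^m − Σ_{j=m}^{n-1} π_j^n; and z_{ij} = 0 otherwise, is a feasible and optimal transport plan for the problem defining d_{mn}. -/

import Mathlib

open Finset

/-- `kmPi α i n` is `π_i^n = α_i ∏_{k=i+1}^n (1 - α_k)` (empty product = 1). -/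
noncomputable def kmPi (α : ℕ → ℝ) (i n : ℕ) : ℝ :=
  α i * ∏ k ∈ Finset.Icc (i + 1) n, (1 - α k)
/-- A feasible transport plan between the probability vectors `π^m` and `π^n`. -/
def IsPlan (α : ℕ → ℝ) (m n : ℕ) (z : ℕ → ℕ → ℝ) : Prop :=
  (∀ i ≤ m, ∀ j ≤ n, 0 ≤ z i j) ∧
  (∀ i ≤ m, ∑ j ∈ Finset.range (n + 1), z i j = kmPi α i m) ∧
  (∀ j ≤ n, ∑ i ∈ Finset.range (m + 1), z i j = kmPi α j n)

/-- Transport cost `Σ_{i=0}^m Σ_{j=0}^n z_{ij} d_{i-1,j-1}`, where indices of `D` are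
shifted by one: `D i j` stands for `d_{i-1,j-1}`. -/
noncomputable def planCost (D : ℕ → ℕ → ℝ) (m n : ℕ) (z : ℕ → ℕ → ℝ) : ℝ :=
  ∑ i ∈ Finset.range (m + 1), ∑ j ∈ Finset.range (n + 1), z i j * D i j

/-- `D : ℕ → ℕ → ℝ` encodes the family `d_{mn}` for `m, n ∈ {-1,0,1,...}` with indices
shifted by one: `D (m+1) (n+1) = d_{m,n}`, `D 0 (k+1) = d_{-1,k}`, etc.  It is the
recursive optimal-transport family: boundary values `d_{-1,-1} = 0`,
`d_{-1,k} = d_{k,-1} = 1`, and `d_{mn}` is the minimum transport cost between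
`π^m` and `π^n` (the minimum, i.e. attained greatest lower bound). -/
def IsKMDist (α : ℕ → ℝ) (D : ℕ → ℕ → ℝ) : Prop :=
  D 0 0 = 0 ∧ (∀ k : ℕ, D 0 (k + 1) = 1) ∧ (∀ k : ℕ, D (k + 1) 0 = 1) ∧
  ∀ m n : ℕ,
    IsLeast {c : ℝ | ∃ z : ℕ → ℕ → ℝ, IsPlan α m n z ∧ c = planCost D m n z}
      (D (m + 1) (n + 1))
/-- The "inside-out" transport plan between `π^m` and `π^n` (for `m ≤ n`):
`z_{ii} = π_i^n` for `i ≤ m`, `z_{mj} = π_j^n` for `m < j < n`,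
`z_{in} = π_i^m - π_i^n` for `i < m`, `z_{mn} = π_m^m - Σ_{j=m}^{n-1} π_j^n`,
and `z_{ij} = 0` otherwise. -/
noncomputable def zio (α : ℕ → ℝ) (m n : ℕ) (i j : ℕ) : ℝ :=
  if i = j then kmPi α i n
  else if i = m ∧ m < j ∧ j < n then kmPi α j n
  else if i < m ∧ j = n then kmPi α i m - kmPi α i n
  else if i = m ∧ j = n then kmPi α m m - ∑ k ∈ Finset.Ico m n, kmPi α k n
  else 0

set_option linter.unusedSectionVars false

section pi
variable {α : ℕ → ℝ} (hα0 : α 0 = 1) (hα : ∀ k, 1 ≤ k → α k ∈ Set.Ico (1 / 2 : ℝ) 1)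
include hα0 hα

lemma alpha_pos (i : ℕ) : 0 < α i := by
  rcases Nat.eq_zero_or_pos i with h | h
  · simp [h, hα0]
  · have := (hα i h).1; linarith

lemma alpha_le_one (i : ℕ) : α i ≤ 1 := by
  rcases Nat.eq_zero_or_pos i with h | h
  · simp [h, hα0]
  · have := (hα i h).2; linarith

lemma alpha_half (i : ℕ) : 1 / 2 ≤ α i := by
  rcases Nat.eq_zero_or_pos i with h | h
  · simp [h, hα0]; norm_num
  · exact (hα i h).1

lemma kmPi_pos (i n : ℕ) : 0 < kmPi α i n := by
  unfold kmPi
  apply mul_pos (alpha_pos hα0 hα i)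
  apply Finset.prod_pos
  intro k hk
  have hk1 : 1 ≤ k := le_trans (Nat.succ_le_succ (Nat.zero_le i)) (Finset.mem_Icc.mp hk).1
  have := (hα k hk1).2; linarith

lemma kmPi_nonneg (i n : ℕ) : 0 ≤ kmPi α i n := (kmPi_pos hα0 hα i n).le

lemma kmPi_self (i : ℕ) : kmPi α i i = α i := by
  unfold kmPi
  rw [Finset.Icc_eq_empty (by omega)]
  simp

lemma kmPi_succ {i n : ℕ} (h : i ≤ n) :
    kmPi α i (n + 1) = (1 - α (n + 1)) * kmPi α i n := by
  unfold kmPi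
  rw [Finset.prod_Icc_succ_top (by omega : i + 1 ≤ n + 1)]
  ring

lemma kmPi_sum (n : ℕ) : ∑ i ∈ Finset.range (n + 1), kmPi α i n = 1 := by
  induction n with
  | zero => simp [kmPi_self hα0 hα, hα0]
  | succ n ih =>
    rw [Finset.sum_range_succ, kmPi_self hα0 hα]
    have : ∀ i ∈ Finset.range (n + 1), kmPi α i (n + 1) = (1 - α (n + 1)) * kmPi α i n := by
      intro i hi
      exact kmPi_succ hα0 hα (by simpa [Nat.lt_succ_iff] using hi)
    rw [Finset.sum_congr rfl this, ← Finset.mul_sum, ih]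
    ring

lemma kmPi_anti {i m n : ℕ} (him : i ≤ m) (hmn : m ≤ n) : kmPi α i n ≤ kmPi α i m := by
  induction n, hmn using Nat.le_induction with
  | base => exact le_refl _
  | succ n hn ih =>
    rw [kmPi_succ hα0 hα (le_trans him hn)]
    nlinarith [kmPi_pos hα0 hα i n, alpha_pos hα0 hα (n+1), alpha_le_one hα0 hα (n+1),
      kmPi_pos hα0 hα i m]

lemma kmPi_sum_range (n : ℕ) : ∑ i ∈ Finset.range n, kmPi α i n = 1 - α n := by
  have := kmPi_sum hα0 hα n
  rw [Finset.sum_range_succ, kmPi_self hα0 hα] at this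
  linarith

lemma kmPi_sum_Ico_le {m n : ℕ} (hmn : m ≤ n) :
    ∑ k ∈ Finset.Ico m n, kmPi α k n ≤ 1 - α n := by
  rw [← kmPi_sum_range hα0 hα n, Finset.range_eq_Ico,
    ← Finset.sum_Ico_consecutive _ (Nat.zero_le m) hmn]
  have : 0 ≤ ∑ k ∈ Finset.Ico 0 m, kmPi α k n :=
    Finset.sum_nonneg fun k _ => kmPi_nonneg hα0 hα k n
  linarith

lemma zio_nonneg {m n : ℕ} (hmn : m ≤ n) : ∀ i ≤ m, ∀ j ≤ n, 0 ≤ zio α m n i j := by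
  intro i hi j hj
  unfold zio
  split_ifs with h1 h2 h3 h4
  · exact kmPi_nonneg hα0 hα i n
  · exact kmPi_nonneg hα0 hα j n
  · exact sub_nonneg.mpr (kmPi_anti hα0 hα (le_of_lt h3.1) hmn)
  · have hmn' : m < n := by omega
    have hn1 : 1 ≤ n := by omega
    have h1 : ∑ k ∈ Finset.Ico m n, kmPi α k n ≤ 1 - α n := kmPi_sum_Ico_le hα0 hα hmn
    have h2 : 1 / 2 ≤ α m := alpha_half hα0 hα m
    have h3 : 1 / 2 ≤ α n := alpha_half hα0 hα n
    rw [kmPi_self hα0 hα]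
    linarith
  · exact le_refl _

lemma zio_row {m n : ℕ} (hmn : m ≤ n) :
    ∀ i ≤ m, ∑ j ∈ Finset.range (n + 1), zio α m n i j = kmPi α i m := by
  intro i hi
  rcases Nat.lt_or_ge i m with him | him
  · -- i < m
    have hin : i ≠ n := by omega
    have key : ∀ j ∈ Finset.range (n + 1), zio α m n i j =
        (if j = i then kmPi α i n else 0) + (if j = n then kmPi α i m - kmPi α i n else 0) := by
      intro j hj
      unfold zio
      split_ifs with h1 h2 h3 h4 <;> first
        | (exfalso; omega)
        | ring
        | (subst_vars; ring)
        | (simp_all; try omega)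
    rw [Finset.sum_congr rfl key, Finset.sum_add_distrib]
    rw [Finset.sum_ite_eq' _ i, Finset.sum_ite_eq' _ n]
    simp only [Finset.mem_range]
    rw [if_pos (by omega), if_pos (by omega)]
    ring
  · -- i = m
    have him : i = m := by omega
    subst him
    rcases Nat.eq_or_lt_of_le hmn with he | hlt
    · subst he
      have key : ∀ j ∈ Finset.range (i + 1), zio α i i i j =
          (if j = i then kmPi α i i else 0) := by
        intro j hj
        unfold zio
        by_cases hji : i = j
        · rw [if_pos hji, if_pos hji.symm, hji]
        · rw [if_neg hji, if_neg (by omega), if_neg (by omega), if_neg (by omega),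
            if_neg (by omega)]
      rw [Finset.sum_congr rfl key, Finset.sum_ite_eq' _ i]
      rw [if_pos (by simp)]
    · -- m < n
      have key : ∀ j ∈ Finset.range (n + 1), zio α i n i j =
          (if j ∈ Finset.Ico i n then kmPi α j n else 0) +
          (if j = n then kmPi α i i - ∑ k ∈ Finset.Ico i n, kmPi α k n else 0) := by
        intro j hj
        simp only [Finset.mem_range] at hj
        unfold zio
        by_cases hji : j = i
        · subst hji
          rw [if_pos rfl, if_pos (Finset.mem_Ico.mpr ⟨le_refl _, hlt⟩), if_neg (by omega)]
          ring
        · rw [if_neg (by omega)]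
          by_cases hjn : j = n
          · subst hjn
            rw [if_neg (by omega), if_neg (by omega), if_pos ⟨rfl, rfl⟩,
              if_neg (by simp [Finset.mem_Ico]), if_pos rfl]
            ring
          · by_cases hij : i < j ∧ j < n
            · rw [if_pos ⟨rfl, hij⟩, if_pos (Finset.mem_Ico.mpr ⟨by omega, hij.2⟩), if_neg hjn]
              ring
            · rw [if_neg (by tauto), if_neg (by omega), if_neg (by tauto),
                if_neg (by simp [Finset.mem_Ico]; omega), if_neg hjn]
              ring
      rw [Finset.sum_congr rfl key, Finset.sum_add_distrib, Finset.sum_ite_mem,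
        Finset.sum_ite_eq' _ n]
      have : Finset.range (n + 1) ∩ Finset.Ico i n = Finset.Ico i n := by
        apply Finset.inter_eq_right.mpr
        intro x hx
        simp only [Finset.mem_Ico] at hx
        simp only [Finset.mem_range]
        omega
      rw [this, if_pos (by simp)]
      ring

lemma zio_col {m n : ℕ} (hmn : m ≤ n) :
    ∀ j ≤ n, ∑ i ∈ Finset.range (m + 1), zio α m n i j = kmPi α j n := by
  intro j hj
  rcases Nat.lt_or_ge j n with hjn | hjn
  · -- j < n : single entry at i = min j m
    rcases le_or_gt j m with hjm | hjm
    · have key : ∀ i ∈ Finset.range (m + 1), zio α m n i j =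
          (if i = j then kmPi α j n else 0) := by
        intro i hi
        unfold zio
        split_ifs with h1 h2 h3 h4 <;> first
          | (exfalso; omega)
          | (subst h1; rfl)
          | rfl
      rw [Finset.sum_congr rfl key, Finset.sum_ite_eq' _ j]
      rw [if_pos (by simp only [Finset.mem_range]; omega)]
    · have key : ∀ i ∈ Finset.range (m + 1), zio α m n i j =
          (if i = m then kmPi α j n else 0) := by
        intro i hi
        simp only [Finset.mem_range] at hi
        unfold zio
        split_ifs with h1 h2 h3 h4 <;> first
          | (exfalso; omega)
          | rfl
      rw [Finset.sum_congr rfl key, Finset.sum_ite_eq' _ m]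
      rw [if_pos (by simp)]
  · -- j = n
    have hjn' : n = j := by omega
    subst hjn'
    rcases Nat.eq_or_lt_of_le hmn with he | hlt
    · have he' : n = m := he.symm
      subst he'
      have key : ∀ i ∈ Finset.range (n + 1), zio α n n i n =
          (if i = n then kmPi α n n else 0) := by
        intro i hi
        simp only [Finset.mem_range] at hi
        unfold zio
        by_cases him : i = n
        · rw [if_pos him, if_pos him, him]
        · have hilt : i < n := by omega
          rw [if_neg him, if_neg (by rintro ⟨_, h, _⟩; exact absurd h (lt_irrefl n)),
            if_pos ⟨hilt, rfl⟩, if_neg him, sub_self]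
      rw [Finset.sum_congr rfl key, Finset.sum_ite_eq' _ n, if_pos (by simp)]
    · have key : ∀ i ∈ Finset.range (m + 1), zio α m n i n =
          (if i ∈ Finset.range m then kmPi α i m - kmPi α i n else 0) +
          (if i = m then kmPi α m m - ∑ k ∈ Finset.Ico m n, kmPi α k n else 0) := by
        intro i hi
        simp only [Finset.mem_range] at hi
        unfold zio
        by_cases him : i < m
        · rw [if_neg (by omega), if_neg (by omega), if_pos ⟨him, rfl⟩,
            if_pos (Finset.mem_range.mpr him), if_neg (by omega)]
          ring
        · have him : i = m := by omega
          subst him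
          rw [if_neg (by omega), if_neg (by omega), if_neg (by omega), if_pos ⟨rfl, rfl⟩,
            if_neg (by simp), if_pos rfl]
          ring
      rw [Finset.sum_congr rfl key, Finset.sum_add_distrib, Finset.sum_ite_mem,
        Finset.sum_ite_eq' _ m]
      have : Finset.range (m + 1) ∩ Finset.range m = Finset.range m := by
        apply Finset.inter_eq_right.mpr
        intro x hx
        simp only [Finset.mem_range] at hx ⊢
        omega
      rw [this, if_pos (by simp)]
      rw [Finset.sum_sub_distrib, kmPi_sum_range hα0 hα m, kmPi_self hα0 hα m,
        kmPi_self hα0 hα n]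
      have hsplit : ∑ k ∈ Finset.range m, kmPi α k n + ∑ k ∈ Finset.Ico m n, kmPi α k n
          = 1 - α n := by
        rw [Finset.range_eq_Ico, Finset.sum_Ico_consecutive _ (Nat.zero_le m) hmn,
          ← Finset.range_eq_Ico, kmPi_sum_range hα0 hα n]
      linarith

lemma zio_plan {m n : ℕ} (hmn : m ≤ n) : IsPlan α m n (zio α m n) :=
  ⟨zio_nonneg hα0 hα hmn, zio_row hα0 hα hmn, zio_col hα0 hα hmn⟩

end pi

section D
variable {α : ℕ → ℝ} (hα0 : α 0 = 1) (hα : ∀ k, 1 ≤ k → α k ∈ Set.Ico (1 / 2 : ℝ) 1)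
  {D : ℕ → ℕ → ℝ} (hD : IsKMDist α D)
include hα0 hα hD

lemma prod_plan (m n : ℕ) : IsPlan α m n (fun i j => kmPi α i m * kmPi α j n) := by
  refine ⟨fun i _ j _ => mul_nonneg (kmPi_nonneg hα0 hα i m) (kmPi_nonneg hα0 hα j n),
    fun i _ => ?_, fun j _ => ?_⟩
  · rw [← Finset.mul_sum, kmPi_sum hα0 hα n, mul_one]
  · rw [← Finset.sum_mul, kmPi_sum hα0 hα m, one_mul]

lemma D_nonneg : ∀ a b, 0 ≤ D a b := by
  have aux : ∀ s a b, a + b ≤ s → 0 ≤ D a b := by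
    intro s
    induction s using Nat.strong_induction_on with
    | _ s ih =>
      intro a b hab
      match a, b with
      | 0, 0 => rw [hD.1]
      | 0, b + 1 => rw [hD.2.1]; norm_num
      | a + 1, 0 => rw [hD.2.2.1]; norm_num
      | m + 1, n + 1 =>
        obtain ⟨z, hz, hc⟩ := (hD.2.2.2 m n).1
        rw [hc]
        apply Finset.sum_nonneg
        intro i hi
        apply Finset.sum_nonneg
        intro j hj
        simp only [Finset.mem_range, Nat.lt_succ_iff] at hi hj
        have : i + j < s := by omega
        exact mul_nonneg (hz.1 i hi j hj) (ih (i + j) this i j (le_refl _))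
  exact fun a b => aux (a + b) a b (le_refl _)

lemma D_le_one : ∀ a b, D a b ≤ 1 := by
  have aux : ∀ s a b, a + b ≤ s → D a b ≤ 1 := by
    intro s
    induction s using Nat.strong_induction_on with
    | _ s ih =>
      intro a b hab
      match a, b with
      | 0, 0 => rw [hD.1]; norm_num
      | 0, b + 1 => rw [hD.2.1]
      | a + 1, 0 => rw [hD.2.2.1]
      | m + 1, n + 1 =>
        have hmem : planCost D m n (fun i j => kmPi α i m * kmPi α j n) ∈
            {c : ℝ | ∃ z : ℕ → ℕ → ℝ, IsPlan α m n z ∧ c = planCost D m n z} :=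
          ⟨_, prod_plan hα0 hα hD m n, rfl⟩
        refine le_trans ((hD.2.2.2 m n).2 hmem) ?_
        unfold planCost
        calc ∑ i ∈ Finset.range (m + 1), ∑ j ∈ Finset.range (n + 1),
              kmPi α i m * kmPi α j n * D i j
            ≤ ∑ i ∈ Finset.range (m + 1), ∑ j ∈ Finset.range (n + 1),
              kmPi α i m * kmPi α j n * 1 := by
              apply Finset.sum_le_sum
              intro i hi
              apply Finset.sum_le_sum
              intro j hj
              simp only [Finset.mem_range, Nat.lt_succ_iff] at hi hj
              have hs : i + j < s := by omega
              exact mul_le_mul_of_nonneg_left (ih (i + j) hs i j (le_refl _))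
                (mul_nonneg (kmPi_nonneg hα0 hα i m) (kmPi_nonneg hα0 hα j n))
          _ = 1 := by
              simp only [mul_one]
              rw [← Finset.sum_mul_sum]
              rw [kmPi_sum hα0 hα m, kmPi_sum hα0 hα n, mul_one]
  exact fun a b => aux (a + b) a b (le_refl _)

lemma D_diag : ∀ a, D a a = 0 := by
  intro a
  induction a using Nat.strong_induction_on with
  | _ a ih =>
    match a with
    | 0 => exact hD.1
    | m + 1 =>
      refine le_antisymm ?_ (D_nonneg hα0 hα hD _ _)
      have hmem : planCost D m m (zio α m m) ∈
          {c : ℝ | ∃ z : ℕ → ℕ → ℝ, IsPlan α m m z ∧ c = planCost D m m z} :=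
        ⟨_, zio_plan hα0 hα (le_refl m), rfl⟩
      refine le_trans ((hD.2.2.2 m m).2 hmem) (le_of_eq ?_)
      unfold planCost
      rw [Finset.sum_eq_zero]
      intro i hi
      rw [Finset.sum_eq_zero]
      intro j hj
      simp only [Finset.mem_range, Nat.lt_succ_iff] at hi hj
      unfold zio
      by_cases hij : i = j
      · subst hij
        rw [ih i (by omega), mul_zero]
      · rw [if_neg hij]
        split_ifs with h2 h3 h4
        · omega
        · rw [sub_self, zero_mul]
        · omega
        · rw [zero_mul]

lemma D_symm : ∀ a b, D a b = D b a := by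
  have aux : ∀ s a b, a + b ≤ s → D a b = D b a := by
    intro s
    induction s using Nat.strong_induction_on with
    | _ s ih =>
      intro a b hab
      match a, b with
      | 0, 0 => rfl
      | 0, b + 1 => rw [hD.2.1, hD.2.2.1]
      | a + 1, 0 => rw [hD.2.1, hD.2.2.1]
      | m + 1, n + 1 =>
        have hset : {c : ℝ | ∃ z : ℕ → ℕ → ℝ, IsPlan α m n z ∧ c = planCost D m n z} =
            {c : ℝ | ∃ z : ℕ → ℕ → ℝ, IsPlan α n m z ∧ c = planCost D n m z} := by
          have tr : ∀ m' n' : ℕ, m' + n' < s → ∀ c : ℝ,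
              (∃ z : ℕ → ℕ → ℝ, IsPlan α m' n' z ∧ c = planCost D m' n' z) →
              (∃ z : ℕ → ℕ → ℝ, IsPlan α n' m' z ∧ c = planCost D n' m' z) := by
            intro m' n' hs c ⟨z, hz, hc⟩
            refine ⟨fun j i => z i j, ⟨fun j hj i hi => hz.1 i hi j hj, hz.2.2, hz.2.1⟩, ?_⟩
            rw [hc]
            unfold planCost
            rw [Finset.sum_comm]
            apply Finset.sum_congr rfl
            intro i hi
            apply Finset.sum_congr rfl
            intro j hj
            simp only [Finset.mem_range, Nat.lt_succ_iff] at hi hj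
            rw [ih (i + j) (by omega) i j (le_refl _)]
          apply Set.eq_of_subset_of_subset
          · intro c hc; exact tr m n (by omega) c hc
          · intro c hc; exact tr n m (by omega) c hc
        have h1 := hD.2.2.2 m n
        have h2 := hD.2.2.2 n m
        rw [hset] at h1
        exact h1.unique h2
  exact fun a b => aux (a + b) a b (le_refl _)

lemma D_tri : ∀ p q r : ℕ, D (p + 1) (r + 1) ≤ D (p + 1) (q + 1) + D (q + 1) (r + 1) := by
  have aux : ∀ s p q r, p + q + r ≤ s →
      D (p + 1) (r + 1) ≤ D (p + 1) (q + 1) + D (q + 1) (r + 1) := by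
    intro s
    induction s using Nat.strong_induction_on with
    | _ s ih =>
      intro p q r hs
      have key : ∀ i j k : ℕ, i ≤ p → j ≤ q → k ≤ r → D i k ≤ D i j + D j k := by
        intro i j k hi hj hk
        match i, j, k with
        | 0, 0, 0 => rw [hD.1]; norm_num
        | 0, 0, k + 1 => rw [hD.2.1, hD.1]; norm_num
        | 0, j + 1, 0 => rw [hD.1, hD.2.1, hD.2.2.1]; norm_num
        | 0, j + 1, k + 1 =>
          rw [hD.2.1, hD.2.1]
          have := D_nonneg hα0 hα hD (j + 1) (k + 1); linarith
        | i + 1, 0, 0 => rw [hD.1, hD.2.2.1]; norm_num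
        | i + 1, 0, k + 1 =>
          rw [hD.2.2.1, hD.2.1]
          have := D_le_one hα0 hα hD (i + 1) (k + 1); linarith
        | i + 1, j + 1, 0 =>
          rw [hD.2.2.1, hD.2.2.1]
          have := D_nonneg hα0 hα hD (i + 1) (j + 1); linarith
        | i + 1, j + 1, k + 1 =>
          exact ih (i + j + k) (by omega) i j k (le_refl _)
      obtain ⟨z1, hz1, hc1⟩ := (hD.2.2.2 p q).1
      obtain ⟨z2, hz2, hc2⟩ := (hD.2.2.2 q r).1
      have hpine : ∀ j : ℕ, kmPi α j q ≠ 0 := fun j => ne_of_gt (kmPi_pos hα0 hα j q)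
      set z3 : ℕ → ℕ → ℝ :=
        fun i k => ∑ j ∈ Finset.range (q + 1), z1 i j / kmPi α j q * z2 j k with hz3
      have hplan : IsPlan α p r z3 := by
        refine ⟨fun i hi k hk => ?_, fun i hi => ?_, fun k hk => ?_⟩
        · apply Finset.sum_nonneg
          intro j hj
          simp only [Finset.mem_range, Nat.lt_succ_iff] at hj
          exact mul_nonneg (div_nonneg (hz1.1 i hi j hj) (kmPi_nonneg hα0 hα j q))
            (hz2.1 j hj k hk)
        · rw [Finset.sum_comm]
          calc ∑ j ∈ Finset.range (q + 1), ∑ k ∈ Finset.range (r + 1),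
                z1 i j / kmPi α j q * z2 j k
              = ∑ j ∈ Finset.range (q + 1), z1 i j := by
                apply Finset.sum_congr rfl
                intro j hj
                simp only [Finset.mem_range, Nat.lt_succ_iff] at hj
                rw [← Finset.mul_sum, hz2.2.1 j hj, div_mul_cancel₀ _ (hpine j)]
            _ = kmPi α i p := hz1.2.1 i hi
        · rw [Finset.sum_comm]
          calc ∑ j ∈ Finset.range (q + 1), ∑ i ∈ Finset.range (p + 1),
                z1 i j / kmPi α j q * z2 j k
              = ∑ j ∈ Finset.range (q + 1), z2 j k := by
                apply Finset.sum_congr rfl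
                intro j hj
                simp only [Finset.mem_range, Nat.lt_succ_iff] at hj
                have : ∀ i ∈ Finset.range (p + 1),
                    z1 i j / kmPi α j q * z2 j k = z1 i j * (z2 j k / kmPi α j q) := by
                  intro i _; ring
                rw [Finset.sum_congr rfl this, ← Finset.sum_mul, hz1.2.2 j hj,
                  mul_div_cancel₀ _ (hpine j)]
            _ = kmPi α k r := hz2.2.2 k hk
      refine le_trans ((hD.2.2.2 p r).2 ⟨z3, hplan, rfl⟩) ?_
      rw [hc1, hc2]
      unfold planCost
      have wnn : ∀ i k j : ℕ, i ≤ p → k ≤ r → j ≤ q →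
          0 ≤ z1 i j / kmPi α j q * z2 j k := by
        intro i k j hi hk hj
        exact mul_nonneg (div_nonneg (hz1.1 i hi j hj) (kmPi_nonneg hα0 hα j q))
          (hz2.1 j hj k hk)
      calc ∑ i ∈ Finset.range (p + 1), ∑ k ∈ Finset.range (r + 1), z3 i k * D i k
          = ∑ i ∈ Finset.range (p + 1), ∑ k ∈ Finset.range (r + 1),
            ∑ j ∈ Finset.range (q + 1), z1 i j / kmPi α j q * z2 j k * D i k := by
            apply Finset.sum_congr rfl; intro i _
            apply Finset.sum_congr rfl; intro k _
            rw [hz3, Finset.sum_mul]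
        _ ≤ ∑ i ∈ Finset.range (p + 1), ∑ k ∈ Finset.range (r + 1),
            ∑ j ∈ Finset.range (q + 1), z1 i j / kmPi α j q * z2 j k * (D i j + D j k) := by
            apply Finset.sum_le_sum; intro i hi
            apply Finset.sum_le_sum; intro k hk
            apply Finset.sum_le_sum; intro j hj
            simp only [Finset.mem_range, Nat.lt_succ_iff] at hi hk hj
            exact mul_le_mul_of_nonneg_left (key i j k hi hj hk) (wnn i k j hi hk hj)
        _ = (∑ i ∈ Finset.range (p + 1), ∑ k ∈ Finset.range (r + 1),
              ∑ j ∈ Finset.range (q + 1), z1 i j / kmPi α j q * z2 j k * D i j) +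
            (∑ i ∈ Finset.range (p + 1), ∑ k ∈ Finset.range (r + 1),
              ∑ j ∈ Finset.range (q + 1), z1 i j / kmPi α j q * z2 j k * D j k) := by
            rw [← Finset.sum_add_distrib]
            apply Finset.sum_congr rfl; intro i _
            rw [← Finset.sum_add_distrib]
            apply Finset.sum_congr rfl; intro k _
            rw [← Finset.sum_add_distrib]
            apply Finset.sum_congr rfl; intro j _
            ring
        _ = (∑ i ∈ Finset.range (p + 1), ∑ j ∈ Finset.range (q + 1), z1 i j * D i j) +
            (∑ j ∈ Finset.range (q + 1), ∑ k ∈ Finset.range (r + 1), z2 j k * D j k) := by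
            congr 1
            · apply Finset.sum_congr rfl; intro i _
              rw [Finset.sum_comm]
              apply Finset.sum_congr rfl; intro j hj
              simp only [Finset.mem_range, Nat.lt_succ_iff] at hj
              have : ∀ k ∈ Finset.range (r + 1),
                  z1 i j / kmPi α j q * z2 j k * D i j =
                  z1 i j / kmPi α j q * D i j * z2 j k := by intro k _; ring
              rw [Finset.sum_congr rfl this, ← Finset.mul_sum, hz2.2.1 j hj,
                div_mul_eq_mul_div, div_mul_eq_mul_div, mul_div_assoc, div_self (hpine j),
                mul_one]
            · calc ∑ i ∈ Finset.range (p + 1), ∑ k ∈ Finset.range (r + 1),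
                    ∑ j ∈ Finset.range (q + 1), z1 i j / kmPi α j q * z2 j k * D j k
                  = ∑ i ∈ Finset.range (p + 1), ∑ j ∈ Finset.range (q + 1),
                    ∑ k ∈ Finset.range (r + 1), z1 i j / kmPi α j q * z2 j k * D j k := by
                    apply Finset.sum_congr rfl; intro i _
                    exact Finset.sum_comm
                _ = ∑ j ∈ Finset.range (q + 1), ∑ i ∈ Finset.range (p + 1),
                    ∑ k ∈ Finset.range (r + 1), z1 i j / kmPi α j q * z2 j k * D j k :=
                    Finset.sum_comm
                _ = ∑ j ∈ Finset.range (q + 1), ∑ k ∈ Finset.range (r + 1),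
                    ∑ i ∈ Finset.range (p + 1), z1 i j / kmPi α j q * z2 j k * D j k := by
                    apply Finset.sum_congr rfl; intro j _
                    exact Finset.sum_comm
                _ = ∑ j ∈ Finset.range (q + 1), ∑ k ∈ Finset.range (r + 1),
                    z2 j k * D j k := by
                    apply Finset.sum_congr rfl; intro j hj
                    apply Finset.sum_congr rfl; intro k _
                    simp only [Finset.mem_range, Nat.lt_succ_iff] at hj
                    have : ∀ i ∈ Finset.range (p + 1),
                        z1 i j / kmPi α j q * z2 j k * D j k =
                        z1 i j * (z2 j k * D j k / kmPi α j q) := by intro i _; ring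
                    rw [Finset.sum_congr rfl this, ← Finset.sum_mul, hz1.2.2 j hj, mul_comm,
                      div_mul_cancel₀ _ (hpine j)]
  exact fun p q r => aux (p + q + r) p q r (le_refl _)

lemma D_zero_r {b : ℕ} (hb : 1 ≤ b) : D 0 b = 1 := by
  obtain ⟨b', rfl⟩ := Nat.exists_eq_succ_of_ne_zero (by omega : b ≠ 0)
  exact hD.2.1 b'

lemma D_zero_l {b : ℕ} (hb : 1 ≤ b) : D b 0 = 1 := by
  obtain ⟨b', rfl⟩ := Nat.exists_eq_succ_of_ne_zero (by omega : b ≠ 0)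
  exact hD.2.2.1 b'

lemma plan_pairing {m n : ℕ} {z : ℕ → ℕ → ℝ} (hz : IsPlan α m n z) (u v : ℕ → ℝ) :
    ∑ i ∈ Finset.range (m + 1), ∑ j ∈ Finset.range (n + 1), z i j * (u i + v j) =
    (∑ i ∈ Finset.range (m + 1), u i * kmPi α i m) +
    (∑ j ∈ Finset.range (n + 1), v j * kmPi α j n) := by
  have step1 : ∀ i ∈ Finset.range (m + 1),
      ∑ j ∈ Finset.range (n + 1), z i j * (u i + v j) =
      u i * (∑ j ∈ Finset.range (n + 1), z i j) +
      ∑ j ∈ Finset.range (n + 1), z i j * v j := by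
    intro i _
    rw [Finset.mul_sum, ← Finset.sum_add_distrib]
    apply Finset.sum_congr rfl
    intro j _
    ring
  rw [Finset.sum_congr rfl step1, Finset.sum_add_distrib]
  congr 1
  · apply Finset.sum_congr rfl
    intro i hi
    simp only [Finset.mem_range, Nat.lt_succ_iff] at hi
    rw [hz.2.1 i hi]
  · rw [Finset.sum_comm]
    apply Finset.sum_congr rfl
    intro j hj
    simp only [Finset.mem_range, Nat.lt_succ_iff] at hj
    rw [← Finset.sum_mul, hz.2.2 j hj, mul_comm]

lemma dual_lower {m n : ℕ} {z : ℕ → ℕ → ℝ} (hz : IsPlan α m n z) (u v : ℕ → ℝ)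
    (hf : ∀ i ≤ m, ∀ j ≤ n, u i + v j ≤ D i j) :
    (∑ i ∈ Finset.range (m + 1), u i * kmPi α i m) +
    (∑ j ∈ Finset.range (n + 1), v j * kmPi α j n) ≤ planCost D m n z := by
  rw [← plan_pairing hα0 hα hD hz u v]
  apply Finset.sum_le_sum
  intro i hi
  apply Finset.sum_le_sum
  intro j hj
  simp only [Finset.mem_range, Nat.lt_succ_iff] at hi hj
  exact mul_le_mul_of_nonneg_left (hf i hi j hj) (hz.1 i hi j hj)

lemma zio_cost_self (m : ℕ) : planCost D m m (zio α m m) = 0 := by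
  unfold planCost
  rw [Finset.sum_eq_zero]
  intro i hi
  rw [Finset.sum_eq_zero]
  intro j hj
  simp only [Finset.mem_range, Nat.lt_succ_iff] at hi hj
  unfold zio
  by_cases hij : i = j
  · subst hij
    rw [D_diag hα0 hα hD i, mul_zero]
  · rw [if_neg hij]
    split_ifs with h2 h3 h4
    · omega
    · rw [sub_self, zero_mul]
    · omega
    · rw [zero_mul]

lemma zio_cost_step (t : ℕ) :
    planCost D t (t + 1) (zio α t (t + 1)) =
    (∑ i ∈ Finset.range t, (kmPi α i t - kmPi α i (t + 1)) * D i (t + 1)) +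
    (α t - kmPi α t (t + 1)) * D t (t + 1) := by
  unfold planCost
  have row : ∀ i ∈ Finset.range (t + 1),
      ∑ j ∈ Finset.range (t + 2), zio α t (t + 1) i j * D i j =
      zio α t (t + 1) i (t + 1) * D i (t + 1) := by
    intro i hi
    simp only [Finset.mem_range, Nat.lt_succ_iff] at hi
    have key : ∀ j ∈ Finset.range (t + 2), zio α t (t + 1) i j * D i j =
        (if j = t + 1 then zio α t (t + 1) i (t + 1) * D i (t + 1) else 0) := by
      intro j hj
      by_cases hjt : j = t + 1
      · rw [if_pos hjt, hjt]
      · rw [if_neg hjt]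
        unfold zio
        by_cases hij : i = j
        · rw [if_pos hij, hij, D_diag hα0 hα hD j, mul_zero]
        · rw [if_neg hij, if_neg (by omega), if_neg (by omega), if_neg (by omega), zero_mul]
    rw [Finset.sum_congr rfl key, Finset.sum_ite_eq' _ (t + 1), if_pos (by simp)]
  rw [Finset.sum_congr rfl row, Finset.sum_range_succ]
  congr 1
  · apply Finset.sum_congr rfl
    intro i hi
    simp only [Finset.mem_range] at hi
    congr 1
    unfold zio
    rw [if_neg (by omega), if_neg (by omega), if_pos ⟨hi, rfl⟩]
  · congr 1
    unfold zio
    rw [if_neg (by omega), if_neg (by omega), if_neg (by omega), if_pos ⟨rfl, rfl⟩,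
      Nat.Ico_succ_singleton, Finset.sum_singleton, kmPi_self hα0 hα]

lemma M_step (a t : ℕ) (hat : a ≤ t)
    (hA : ∀ i, 1 ≤ i → i ≤ t →
      ∑ b ∈ Finset.range (t + 1), kmPi α b t * D i b ≤ D i (t + 1)) :
    D (a + 1) (t + 1) ≤ D (a + 1) (t + 2) := by
  obtain ⟨z, hz, hc⟩ := (hD.2.2.2 a (t + 1)).1
  have gbound : ∀ i ≤ a, ∑ b ∈ Finset.range (t + 1), kmPi α b t * D i b ≤ D i (t + 1) := by
    intro i hi
    rcases Nat.eq_zero_or_pos i with h0 | h1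
    · subst h0
      rw [D_zero_r hα0 hα hD (by omega)]
      calc ∑ b ∈ Finset.range (t + 1), kmPi α b t * D 0 b
          ≤ ∑ b ∈ Finset.range (t + 1), kmPi α b t * 1 := by
            apply Finset.sum_le_sum
            intro b _
            exact mul_le_mul_of_nonneg_left (D_le_one hα0 hα hD 0 b) (kmPi_nonneg hα0 hα b t)
        _ = 1 := by simp only [mul_one]; exact kmPi_sum hα0 hα t
    · exact hA i h1 (le_trans hi hat)
  set z' : ℕ → ℕ → ℝ := fun i b => z i b + z i (t + 1) * kmPi α b t with hz'
  have hplan : IsPlan α a t z' := by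
    refine ⟨fun i hi b hb => ?_, fun i hi => ?_, fun b hb => ?_⟩
    · exact add_nonneg (hz.1 i hi b (by omega))
        (mul_nonneg (hz.1 i hi (t + 1) (le_refl _)) (kmPi_nonneg hα0 hα b t))
    · have h1 := hz.2.1 i hi
      rw [Finset.sum_range_succ] at h1
      calc ∑ b ∈ Finset.range (t + 1), (z i b + z i (t + 1) * kmPi α b t)
          = (∑ b ∈ Finset.range (t + 1), z i b) +
            z i (t + 1) * ∑ b ∈ Finset.range (t + 1), kmPi α b t := by
            rw [Finset.sum_add_distrib, Finset.mul_sum]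
        _ = kmPi α i a := by rw [kmPi_sum hα0 hα t]; linarith
    · have h1 := hz.2.2 b (by omega)
      have h2 := hz.2.2 (t + 1) (le_refl _)
      rw [kmPi_self hα0 hα] at h2
      calc ∑ i ∈ Finset.range (a + 1), (z i b + z i (t + 1) * kmPi α b t)
          = (∑ i ∈ Finset.range (a + 1), z i b) +
            (∑ i ∈ Finset.range (a + 1), z i (t + 1)) * kmPi α b t := by
            rw [Finset.sum_add_distrib, Finset.sum_mul]
        _ = kmPi α b (t + 1) + α (t + 1) * kmPi α b t := by rw [h1, h2]
        _ = kmPi α b t := by rw [kmPi_succ hα0 hα hb]; ring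
  have hle : planCost D a t z' ≤ planCost D a (t + 1) z := by
    unfold planCost
    apply Finset.sum_le_sum
    intro i hi
    simp only [Finset.mem_range, Nat.lt_succ_iff] at hi
    conv_rhs => rw [Finset.sum_range_succ]
    calc ∑ b ∈ Finset.range (t + 1), z' i b * D i b
        = (∑ b ∈ Finset.range (t + 1), z i b * D i b) +
          z i (t + 1) * ∑ b ∈ Finset.range (t + 1), kmPi α b t * D i b := by
          rw [Finset.mul_sum, ← Finset.sum_add_distrib]
          apply Finset.sum_congr rfl
          intro b _
          show (z i b + z i (t + 1) * kmPi α b t) * D i b = _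
          ring
      _ ≤ (∑ b ∈ Finset.range (t + 1), z i b * D i b) + z i (t + 1) * D i (t + 1) := by
          have := mul_le_mul_of_nonneg_left (gbound i hi) (hz.1 i hi (t + 1) (le_refl _))
          linarith
  refine le_trans ((hD.2.2.2 a t).2 ⟨z', hplan, rfl⟩) (le_trans hle (le_of_eq hc.symm))

end D


/-- if `α_k ≥ 1/2` and the 4-point inequality holds for all
`0 ≤ i ≤ k ≤ j ≤ l < n`, then for every `m ≤ n` the inside-out plan is a feasible
and optimal transport plan for the problem defining `d_{mn}`. -/
theorem km_inside_out_optimal (α : ℕ → ℝ) (hα0 : α 0 = 1)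
    (hα : ∀ k, 1 ≤ k → α k ∈ Set.Ico (1 / 2 : ℝ) 1)
    (D : ℕ → ℕ → ℝ) (hD : IsKMDist α D) (n : ℕ)
    (h4 : ∀ i k j l : ℕ, i ≤ k → k ≤ j → j ≤ l → l < n →
      D (i + 1) (l + 1) + D (k + 1) (j + 1) ≤
        D (i + 1) (j + 1) + D (k + 1) (l + 1)) :
    ∀ m ≤ n, IsPlan α m n (zio α m n) ∧
      planCost D m n (zio α m n) = D (m + 1) (n + 1) := by
  have grand : ∀ N, N ≤ n →
      (∀ m ≤ N, IsPlan α m N (zio α m N) ∧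
        planCost D m N (zio α m N) = D (m + 1) (N + 1)) ∧
      (∀ i, 1 ≤ i → i ≤ N →
        ∑ b ∈ Finset.range (N + 1), kmPi α b N * D i b ≤ D i (N + 1)) := by
    intro N
    induction N using Nat.strong_induction_on with
    | _ N ihN =>
      intro hNn
      have thm : ∀ m ≤ N, IsPlan α m N (zio α m N) ∧
          planCost D m N (zio α m N) = D (m + 1) (N + 1) := by
        intro m hmN
        refine ⟨zio_plan hα0 hα hmN, ?_⟩
        rcases eq_or_lt_of_le hmN with he | hlt
        · subst he
          rw [zio_cost_self hα0 hα hD m, D_diag hα0 hα hD (m + 1)]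
        · rcases Nat.eq_zero_or_pos m with hm0 | hm1
          · subst hm0
            obtain ⟨z, hz, hc⟩ := (hD.2.2.2 0 N).1
            rw [hc]
            unfold planCost
            rw [Finset.sum_range_one, Finset.sum_range_one]
            apply Finset.sum_congr rfl
            intro j hj
            simp only [Finset.mem_range, Nat.lt_succ_iff] at hj
            congr 1
            have h1 := hz.2.2 j hj
            rw [Finset.sum_range_one] at h1
            have h2 := (zio_col hα0 hα (Nat.zero_le N)) j hj
            rw [Finset.sum_range_one] at h2
            rw [h2, ← h1]
          · -- 1 ≤ m < N : duality argument
            have hN1 : 1 ≤ N := by omega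
            have mono : ∀ j, m ≤ j → j ≤ N → D m j ≤ D m N := by
              have chain : ∀ t, t ≤ N → ∀ j, m ≤ j → j ≤ t → D m j ≤ D m t := by
                intro t
                induction t with
                | zero => intro _ j hmj hj0; omega
                | succ t iht =>
                  intro htN j hmj hjt
                  rcases eq_or_lt_of_le hjt with he | hlt'
                  · exact le_of_eq (by rw [he])
                  · have h1 : D m j ≤ D m t := iht (by omega) j hmj (by omega)
                    have h2 : D m t ≤ D m (t + 1) := by
                      obtain ⟨a, rfl⟩ : ∃ a, m = a + 1 := ⟨m - 1, by omega⟩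
                      obtain ⟨w, rfl⟩ : ∃ w, t = w + 1 := ⟨t - 1, by omega⟩
                      exact M_step hα0 hα hD a w (by omega)
                        ((ihN w (by omega) (by omega)).2)
                    linarith
              exact fun j hmj hjN => chain N (le_refl N) j hmj hjN
            set u : ℕ → ℝ := fun i => D i N - D m N with hu
            set v : ℕ → ℝ := fun j => if m < j then D m j else D m N - D j N with hv
            have hDF : ∀ i ≤ m, ∀ j ≤ N, u i + v j ≤ D i j := by
              intro i hi j hj
              simp only [hu, hv]
              by_cases hjm : m < j
              · rw [if_pos hjm]
                rcases eq_or_lt_of_le hi with he | hile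
                · rw [he]; simp
                · rcases Nat.eq_zero_or_pos i with h0 | h1
                  · subst h0
                    rw [D_zero_r hα0 hα hD hN1, D_zero_r hα0 hα hD (by omega : 1 ≤ j)]
                    have := mono j (by omega) hj
                    linarith
                  · obtain ⟨i', rfl⟩ : ∃ i', i = i' + 1 := ⟨i - 1, by omega⟩
                    obtain ⟨m', rfl⟩ : ∃ m', m = m' + 1 := ⟨m - 1, by omega⟩
                    obtain ⟨j', rfl⟩ : ∃ j', j = j' + 1 := ⟨j - 1, by omega⟩
                    obtain ⟨N', rfl⟩ : ∃ N', N = N' + 1 := ⟨N - 1, by omega⟩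
                    have h4' := h4 i' m' j' N' (by omega) (by omega) (by omega) (by omega)
                    linarith
              · rw [if_neg hjm]
                by_cases hij : i = j
                · rw [hij, D_diag hα0 hα hD j]
                  linarith
                · rcases Nat.eq_zero_or_pos i with h0 | hi1
                  · subst h0
                    have hj1 : 1 ≤ j := by omega
                    rw [D_zero_r hα0 hα hD hN1, D_zero_r hα0 hα hD hj1]
                    have := D_nonneg hα0 hα hD j N
                    linarith
                  · rcases Nat.eq_zero_or_pos j with hj0 | hj1
                    · subst hj0
                      rw [D_zero_r hα0 hα hD hN1, D_zero_l hα0 hα hD hi1]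
                      have := D_le_one hα0 hα hD i N
                      linarith
                    · obtain ⟨i', rfl⟩ : ∃ i', i = i' + 1 := ⟨i - 1, by omega⟩
                      obtain ⟨j', rfl⟩ : ∃ j', j = j' + 1 := ⟨j - 1, by omega⟩
                      obtain ⟨N', rfl⟩ : ∃ N', N = N' + 1 := ⟨N - 1, by omega⟩
                      have := D_tri hα0 hα hD i' j' N'
                      linarith
            have hsupp : ∀ i ≤ m, ∀ j ≤ N,
                zio α m N i j * D i j = zio α m N i j * (u i + v j) := by
              intro i hi j hj
              unfold zio
              split_ifs with h1 h2 h3 hb4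
              · rw [← h1, D_diag hα0 hα hD i]
                have : u i + v i = 0 := by
                  simp only [hu, hv]
                  rw [if_neg (by omega : ¬ m < i)]
                  ring
                rw [this]
              · congr 1
                rw [h2.1]
                simp only [hu, hv]
                rw [if_pos h2.2.1]
                ring
              · congr 1
                rw [h3.2]
                simp only [hu, hv]
                rw [if_pos hlt]
                ring
              · congr 1
                rw [hb4.1, hb4.2]
                simp only [hu, hv]
                rw [if_pos hlt]
                ring
              · rw [zero_mul, zero_mul]
            have hzio := zio_plan hα0 hα (le_of_lt hlt)
            have e1 : planCost D m N (zio α m N) =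
                (∑ i ∈ Finset.range (m + 1), u i * kmPi α i m) +
                (∑ j ∈ Finset.range (N + 1), v j * kmPi α j N) := by
              unfold planCost
              rw [Finset.sum_congr rfl fun i hi => Finset.sum_congr rfl fun j hj =>
                hsupp i (Nat.lt_succ_iff.mp (Finset.mem_range.mp hi))
                  j (Nat.lt_succ_iff.mp (Finset.mem_range.mp hj))]
              exact plan_pairing hα0 hα hD hzio u v
            obtain ⟨z, hz, hc⟩ := (hD.2.2.2 m N).1
            have e2 := dual_lower hα0 hα hD hz u v hDF
            have e3 := (hD.2.2.2 m N).2 ⟨_, hzio, rfl⟩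
            rw [← hc] at e2
            linarith
      refine ⟨thm, ?_⟩
      intro i hi1 hiN
      rcases eq_or_lt_of_le hiN with he | hlt
      · -- i = N
        subst he
        obtain ⟨t, rfl⟩ : ∃ t, i = t + 1 := ⟨i - 1, by omega⟩
        have hopt := (thm t (by omega)).2
        rw [zio_cost_step hα0 hα hD t] at hopt
        rw [← hopt, Finset.sum_range_succ, D_diag hα0 hα hD (t + 1), mul_zero, add_zero,
          Finset.sum_range_succ]
        have hterm : ∀ b ∈ Finset.range t,
            kmPi α b (t + 1) * D (t + 1) b ≤ (kmPi α b t - kmPi α b (t + 1)) * D b (t + 1) := by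
          intro b hb
          simp only [Finset.mem_range] at hb
          rw [D_symm hα0 hα hD (t + 1) b]
          apply mul_le_mul_of_nonneg_right _ (D_nonneg hα0 hα hD b (t + 1))
          rw [kmPi_succ hα0 hα (by omega : b ≤ t)]
          nlinarith [kmPi_nonneg hα0 hα b t, alpha_half hα0 hα (t + 1),
            alpha_le_one hα0 hα (t + 1)]
        have hlast : kmPi α t (t + 1) * D (t + 1) t ≤
            (α t - kmPi α t (t + 1)) * D t (t + 1) := by
          rw [D_symm hα0 hα hD (t + 1) t]
          apply mul_le_mul_of_nonneg_right _ (D_nonneg hα0 hα hD t (t + 1))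
          rw [kmPi_succ hα0 hα (le_refl t), kmPi_self hα0 hα]
          nlinarith [alpha_pos hα0 hα t, alpha_half hα0 hα (t + 1),
            alpha_le_one hα0 hα (t + 1)]
        exact add_le_add (Finset.sum_le_sum hterm) hlast
      · -- i < N
        obtain ⟨t, rfl⟩ : ∃ t, N = t + 1 := ⟨N - 1, by omega⟩
        have hA_t := (ihN t (by omega) (by omega)).2
        have step1 : ∑ b ∈ Finset.range (t + 2), kmPi α b (t + 1) * D i b =
            (1 - α (t + 1)) * (∑ b ∈ Finset.range (t + 1), kmPi α b t * D i b) +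
            α (t + 1) * D i (t + 1) := by
          rw [Finset.sum_range_succ, kmPi_self hα0 hα]
          congr 1
          rw [Finset.mul_sum]
          apply Finset.sum_congr rfl
          intro b hb
          simp only [Finset.mem_range, Nat.lt_succ_iff] at hb
          rw [kmPi_succ hα0 hα hb]
          ring
        have hg : ∑ b ∈ Finset.range (t + 1), kmPi α b t * D i b ≤ D i (t + 1) :=
          hA_t i hi1 (by omega)
        have hM : D i (t + 1) ≤ D i (t + 2) := by
          obtain ⟨a, rfl⟩ : ∃ a, i = a + 1 := ⟨i - 1, by omega⟩
          exact M_step hα0 hα hD a t (by omega) hA_t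
        rw [step1]
        have ha1 : (0:ℝ) ≤ 1 - α (t + 1) := by
          have := alpha_le_one hα0 hα (t + 1); linarith
        nlinarith [mul_le_mul_of_nonneg_left hg ha1]
  exact fun m hm => (grand n (le_refl n)).1 m hm
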